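/- Let (X, μ) be a measure space, let J and L be finite index types, and let (Y j)_{j∈J} and (Z ℓ)_{ℓ∈L} be orthonormal families in L²(μ; ℂ). Let v : X → ℝ be measurable with |v x| ≤ B almost everywhere, for some real B ≥ 0. Define E : Matrix J L ℂ by E j ℓ = ∫ conj(Y j x) · (Z ℓ x) · v x ∂μ(x). Then for every vector u : L → ℂ, the Euclidean norm of the matrix–vector product satisfies Σ_{j∈J} ‖(E.mulVec u) j‖² ≤ B² · Σ_{ℓ∈L} ‖u ℓ‖². -/

import Mathlib

open MeasureTheory ComplexConjugate

private lemma lp_coeFn_sum {X : Type*} [MeasurableSpace X] {μ : Measure X}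
    {L : Type*} (s : Finset L) (f : L → Lp ℂ 2 μ) :
    ⇑(∑ ℓ ∈ s, f ℓ) =ᵐ[μ] fun x => ∑ ℓ ∈ s, f ℓ x := by
  classical
  induction s using Finset.induction_on with
  | empty =>
    simp only [Finset.sum_empty]
    exact Lp.coeFn_zero ℂ 2 μ
  | @insert a s h ih =>
    rw [Finset.sum_insert h]
    filter_upwards [Lp.coeFn_add (f a) (∑ ℓ ∈ s, f ℓ), ih] with x hx1 hx2
    rw [hx1, Finset.sum_insert h, Pi.add_apply, hx2]

/-- Analytic core of Theorem 3.2: for orthonormal families `(Y j)` and `(Z ℓ)` in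
`L²(μ; ℂ)` and a measurable mask `v` with `|v| ≤ B` a.e., the matrix
`E j ℓ = ∫ conj(Y j x) * Z ℓ x * v x dμ` satisfies
`Σ_j ‖(E.mulVec u) j‖² ≤ B² Σ_ℓ ‖u ℓ‖²` for every vector `u`. -/
theorem stmt_2 {X : Type*} [MeasurableSpace X] {μ : Measure X}
    {J L : Type*} [Fintype J] [Fintype L]
    (Y : J → Lp ℂ 2 μ) (Z : L → Lp ℂ 2 μ)
    (hY : Orthonormal ℂ Y) (hZ : Orthonormal ℂ Z)
    (v : X → ℝ) (hv : Measurable v) (B : ℝ) (hB : 0 ≤ B)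
    (hvB : ∀ᵐ x ∂μ, |v x| ≤ B)
    (E : Matrix J L ℂ)
    (hE : ∀ j ℓ, E j ℓ = ∫ x, conj (Y j x) * (Z ℓ x) * (v x : ℂ) ∂μ)
    (u : L → ℂ) :
    ∑ j, ‖E.mulVec u j‖ ^ 2 ≤ B ^ 2 * ∑ ℓ, ‖u ℓ‖ ^ 2 := by
  classical
  set g : Lp ℂ 2 μ := ∑ ℓ, u ℓ • Z ℓ with hgdef
  have hgc : ⇑g =ᵐ[μ] fun x => ∑ ℓ, u ℓ * Z ℓ x := by
    refine (lp_coeFn_sum Finset.univ fun ℓ => u ℓ • Z ℓ).trans ?_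
    have : ∀ ℓ : L, ⇑(u ℓ • Z ℓ) =ᵐ[μ] fun x => u ℓ * Z ℓ x := fun ℓ => Lp.coeFn_smul _ _
    have h := Filter.eventually_all.mpr (fun ℓ : L => this ℓ)
    filter_upwards [h] with x hx
    simp only [hx]
  -- the masked function
  have hvc : AEStronglyMeasurable (fun x => (v x : ℂ)) μ :=
    (Complex.measurable_ofReal.comp hv).aestronglyMeasurable
  have hvB' : ∀ᵐ x ∂μ, ‖(v x : ℂ)‖ ≤ B := by
    filter_upwards [hvB] with x hx
    simpa [Complex.norm_real] using hx
  have hfmem : MemLp (fun x => g x * (v x : ℂ)) 2 μ := by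
    refine MemLp.of_le_mul (c := B) (Lp.memLp g)
      ((Lp.aestronglyMeasurable g).mul hvc) ?_
    filter_upwards [hvB'] with x hx
    calc ‖g x * (v x : ℂ)‖ = ‖g x‖ * ‖(v x : ℂ)‖ := norm_mul _ _
      _ ≤ ‖g x‖ * B := mul_le_mul_of_nonneg_left hx (norm_nonneg _)
      _ = B * ‖g x‖ := mul_comm _ _
  set f : Lp ℂ 2 μ := hfmem.toLp _ with hfdef
  -- norm bound ‖f‖ ≤ B * ‖g‖
  have hfnorm : ‖f‖ ≤ B * ‖g‖ := by
    rw [hfdef, Lp.norm_toLp]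
    have hb : eLpNorm (fun x => g x * (v x : ℂ)) 2 μ ≤
        ENNReal.ofReal B * eLpNorm (⇑g) 2 μ := by
      refine eLpNorm_le_mul_eLpNorm_of_ae_le_mul ?_ 2
      filter_upwards [hvB'] with x hx
      calc ‖g x * (v x : ℂ)‖ = ‖g x‖ * ‖(v x : ℂ)‖ := norm_mul _ _
        _ ≤ ‖g x‖ * B := mul_le_mul_of_nonneg_left hx (norm_nonneg _)
        _ = B * ‖g x‖ := mul_comm _ _
    have := ENNReal.toReal_mono ?_ hb
    · rwa [ENNReal.toReal_mul, ENNReal.toReal_ofReal hB, ← Lp.norm_def] at this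
    · exact ENNReal.mul_ne_top ENNReal.ofReal_ne_top (Lp.eLpNorm_ne_top g)
  -- each integrand is integrable
  have hint : ∀ (j : J) (ℓ : L),
      Integrable (fun x => conj (Y j x) * Z ℓ x * (v x : ℂ)) μ := by
    intro j ℓ
    have h1 : Integrable (fun x => conj (Y j x) * Z ℓ x) μ := by
      have := L2.integrable_inner (𝕜 := ℂ) (Y j) (Z ℓ)
      simpa [RCLike.inner_apply, mul_comm] using this
    have := h1.bdd_mul (c := B) hvc hvB'
    · simpa [mul_comm, mul_assoc, mul_left_comm] using this
  -- E.mulVec u j equals the inner product ⟪Y j, f⟫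
  have hkey : ∀ j : J, E.mulVec u j = inner (𝕜 := ℂ) (Y j) f := by
    intro j
    have hfc : ⇑f =ᵐ[μ] fun x => g x * (v x : ℂ) := hfmem.coeFn_toLp
    rw [MeasureTheory.L2.inner_def]
    have heq : (∫ x, inner (𝕜 := ℂ) (Y j x) (f x) ∂μ)
        = ∫ x, ∑ ℓ, u ℓ * (conj (Y j x) * Z ℓ x * (v x : ℂ)) ∂μ := by
      refine integral_congr_ae ?_
      filter_upwards [hfc, hgc] with x hx1 hx2
      rw [RCLike.inner_apply, hx1, hx2]
      rw [Finset.sum_mul, Finset.sum_mul]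
      ring_nf
      refine Finset.sum_congr rfl fun ℓ _ => by ring
    rw [heq, integral_finset_sum _ (fun ℓ _ => ((hint j ℓ).const_mul (u ℓ)))]
    simp only [integral_const_mul]
    rw [Matrix.mulVec, dotProduct]
    refine Finset.sum_congr rfl fun ℓ _ => ?_
    rw [hE j ℓ, mul_comm]
  -- Parseval for g
  have hgnorm : ‖g‖ ^ 2 = ∑ ℓ, ‖u ℓ‖ ^ 2 := by
    have h1 : inner (𝕜 := ℂ) g g = ∑ ℓ, conj (u ℓ) * u ℓ := by
      rw [hgdef]
      exact hZ.inner_sum u u Finset.univ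
    have h2 := inner_self_eq_norm_sq (𝕜 := ℂ) g
    rw [h1] at h2
    rw [← h2, map_sum]
    refine Finset.sum_congr rfl fun ℓ _ => ?_
    rw [RCLike.conj_mul]
    norm_cast
  -- Bessel's inequality
  calc ∑ j, ‖E.mulVec u j‖ ^ 2
      = ∑ j, ‖inner (𝕜 := ℂ) (Y j) f‖ ^ 2 := by
        refine Finset.sum_congr rfl fun j _ => by rw [hkey j]
    _ ≤ ‖f‖ ^ 2 := hY.sum_inner_products_le f
    _ ≤ (B * ‖g‖) ^ 2 := by
        have := sq_le_sq' (by linarith [norm_nonneg f, mul_nonneg hB (norm_nonneg g)]) hfnorm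
        simpa using this
    _ = B ^ 2 * ∑ ℓ, ‖u ℓ‖ ^ 2 := by rw [mul_pow, hgnorm]
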